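/- Let −∞ ≤ a < b ≤ ∞ and let I be one of the intervals (a,b), (a,b], [a,b), [a,b]. Let α, β : I → ℝ be continuous and let A(t) be the 2×2 real matrix with rows (α(t), β(t)) and (−β(t), α(t)). Suppose that κ₃₁(t) := ∫_t^b e^{−∫_t^s α(τ) dτ} ds exists (as a finite, possibly improper, integral) for all t ∈ I, and that K₃₁ := sup_{t∈I} κ₃₁(t) < ∞. Then the system x' = A(t)x is Ulam stable on I with Ulam constant K₃₁ (with respect to the Euclidean norm on ℝ²). Furthermore, if in addition lim_{t→b⁻} ∫_{t₀}^t α(s) ds = ∞ for t₀ ∈ (a,b), then for every ε > 0 and every continuously differentiable φ : I → ℝ² with sup_{t∈I} ‖φ'(t) − A(t)φ(t)‖₂ ≤ ε, there exists a unique solution x of x' = A(t)x satisfying sup_{t∈I} ‖φ(t) − x(t)‖₂ ≤ K₃₁ε. -/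

import Mathlib

open MeasureTheory Filter Set

noncomputable section

/-- The Euclidean norm `√(v₁² + v₂²)` on `ℝ²`. -/
def enorm2 (v : Fin 2 → ℝ) : ℝ := Real.sqrt ((v 0) ^ 2 + (v 1) ^ 2)

/-- Ulam stability on `I` with constant `K` for the system `x' = A(t) x` on `ℝ²`,
with respect to the Euclidean norm. -/
def UlamStable2R (I : Set ℝ) (A : ℝ → Matrix (Fin 2) (Fin 2) ℝ) (K : ℝ) : Prop :=
  0 < K ∧
  ∀ ε : ℝ, 0 < ε →
    ∀ φ φd : ℝ → Fin 2 → ℝ,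
      (∀ t ∈ I, HasDerivWithinAt φ (φd t) I t) →
      ContinuousOn φd I →
      (∀ t ∈ I, enorm2 (φd t - (A t).mulVec (φ t)) ≤ ε) →
      ∃ x : ℝ → Fin 2 → ℝ,
        (∀ t ∈ I, HasDerivWithinAt x ((A t).mulVec (x t)) I t) ∧
        ∀ t ∈ I, enorm2 (φ t - x t) ≤ K * ε

/-- `κ₃₁(t) = ∫_t^b exp(-∫_t^s α) ds`. -/
def kappa31 (b : EReal) (al : ℝ → ℝ) (t : ℝ) : ℝ :=
  ∫ s in {s : ℝ | t < s ∧ (s : EReal) < b}, Real.exp (-∫ τ in t..s, al τ)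

lemma aux_enorm2 (v : Fin 2 → ℝ) :
    enorm2 v = ‖(v 0 : ℂ) + v 1 * Complex.I‖ := by
  rw [enorm2, Complex.norm_def, Complex.normSq_apply]
  simp [pow_two]

lemma aux_ftc2 {I : Set ℝ} (hconn : ∀ t₁ ∈ I, ∀ t₂ ∈ I, Icc t₁ t₂ ⊆ I)
    {h k : ℝ → ℂ} (hd : ∀ t ∈ I, HasDerivWithinAt h (k t) I t) (hk : ContinuousOn k I)
    {t₁ t₂ : ℝ} (h₁ : t₁ ∈ I) (h₂ : t₂ ∈ I) (hle : t₁ ≤ t₂) :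
    ∫ s in t₁..t₂, k s = h t₂ - h t₁ := by
  have hsub : Icc t₁ t₂ ⊆ I := hconn t₁ h₁ t₂ h₂
  refine intervalIntegral.integral_eq_sub_of_hasDeriv_right_of_le hle
    (fun t ht => ((hd t (hsub ht)).continuousWithinAt).mono hsub) (fun t ht => ?_) ?_
  · have hIt : I ∈ nhds t := mem_nhds_iff.2 ⟨Ioo t₁ t₂, (Ioo_subset_Icc_self).trans hsub,
      isOpen_Ioo, ht⟩
    exact ((hd t (hsub (Ioo_subset_Icc_self ht))).hasDerivAt hIt).hasDerivWithinAt
  · exact (hk.mono (by rwa [uIcc_of_le hle])).intervalIntegrable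

lemma aux_ftc1 {a b : EReal} {I : Set ℝ} (hab : a < b)
    (hI1 : ∀ x : ℝ, a < (x : EReal) → (x : EReal) < b → x ∈ I)
    (hI2 : ∀ x ∈ I, a ≤ (x : EReal) ∧ (x : EReal) ≤ b)
    (hconn : ∀ t₁ ∈ I, ∀ t₂ ∈ I, Icc t₁ t₂ ⊆ I)
    (hImeas : MeasurableSet I)
    {f : ℝ → ℝ} (hf : ContinuousOn f I) {t₀ t : ℝ} (ht₀ : t₀ ∈ I) (ht : t ∈ I) :
    HasDerivWithinAt (fun u => ∫ s in t₀..u, f s) (f t) I t := by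
  obtain ⟨hta, htb⟩ := hI2 t ht
  have hII : IntervalIntegrable f volume t₀ t := by
    apply ContinuousOn.intervalIntegrable
    apply hf.mono
    rcases le_total t₀ t with hle | hle
    · rw [uIcc_of_le hle]; exact hconn t₀ ht₀ t ht
    · rw [uIcc_of_ge hle]; exact hconn t ht t₀ ht₀
  by_cases hb' : (t : EReal) < b
  · obtain ⟨m₂, hm₂1, hm₂2⟩ := EReal.exists_between_coe_real hb'
    have hm₂t : t < m₂ := by exact_mod_cast hm₂1
    have hIoo2 : Ioo t m₂ ⊆ I := by
      intro u hu
      exact hI1 u (lt_of_le_of_lt hta (by exact_mod_cast hu.1))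
        (lt_trans (by exact_mod_cast hu.2) hm₂2)
    by_cases ha' : a < (t : EReal)
    · obtain ⟨m₁, hm₁1, hm₁2⟩ := EReal.exists_between_coe_real ha'
      have hm₁t : m₁ < t := by exact_mod_cast hm₁2
      have hIoo : Ioo m₁ m₂ ⊆ I := by
        intro u hu
        exact hI1 u (lt_trans hm₁1 (by exact_mod_cast hu.1))
          (lt_trans (by exact_mod_cast hu.2) hm₂2)
      have hIt : I ∈ nhds t := mem_nhds_iff.2 ⟨Ioo m₁ m₂, hIoo, isOpen_Ioo, hm₁t, hm₂t⟩
      exact (intervalIntegral.integral_hasDerivAt_right hII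
        ⟨I, hIt, hf.aestronglyMeasurable hImeas⟩ (hf.continuousAt hIt)).hasDerivWithinAt
    · have haeq : a = (t : EReal) := le_antisymm hta (not_lt.1 ha')
      have hIin : I ∈ nhdsWithin t (Ioi t) := mem_of_superset
        (Ioo_mem_nhdsGT_of_mem ⟨le_refl t, hm₂t⟩) hIoo2
      have hmeas : StronglyMeasurableAtFilter f (nhdsWithin t (Ioi t)) volume :=
        ⟨I, hIin, hf.aestronglyMeasurable hImeas⟩
      have hcont : ContinuousWithinAt f (Ioi t) t := (hf t ht).mono_of_mem_nhdsWithin hIin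
      have hsub : I ⊆ Ici t := by
        intro u hu
        have h1 : (t : EReal) ≤ (u : EReal) := haeq ▸ (hI2 u hu).1
        exact mem_Ici.2 (by exact_mod_cast h1)
      exact (intervalIntegral.integral_hasDerivWithinAt_right hII hmeas hcont).mono hsub
  · have hbeq : b = (t : EReal) := le_antisymm (not_lt.1 hb') htb
    have hat : a < (t : EReal) := hbeq ▸ hab
    obtain ⟨m₁, hm₁1, hm₁2⟩ := EReal.exists_between_coe_real hat
    have hm₁t : m₁ < t := by exact_mod_cast hm₁2
    have hIco : Ioc m₁ t ⊆ I := by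
      intro u hu
      rcases eq_or_lt_of_le hu.2 with h | h
      · exact h ▸ ht
      · exact hI1 u (lt_trans hm₁1 (by exact_mod_cast hu.1)) (hbeq ▸ (by exact_mod_cast h))
    have hIin : I ∈ nhdsWithin t (Iic t) := mem_of_superset
      (Ioc_mem_nhdsLE_of_mem ⟨hm₁t, le_refl t⟩) hIco
    have hmeas : StronglyMeasurableAtFilter f (nhdsWithin t (Iic t)) volume :=
      ⟨I, hIin, hf.aestronglyMeasurable hImeas⟩
    have hcont : ContinuousWithinAt f (Iic t) t := (hf t ht).mono_of_mem_nhdsWithin hIin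
    have hsub : I ⊆ Iic t := by
      intro u hu
      have h2 : (u : EReal) ≤ (t : EReal) := hbeq ▸ (hI2 u hu).2
      exact mem_Iic.2 (by exact_mod_cast h2)
    exact (intervalIntegral.integral_hasDerivWithinAt_right hII hmeas hcont).mono hsub

lemma aux_ofReal {g : ℝ → ℝ} {g' : ℝ} {I : Set ℝ} {t : ℝ} (h : HasDerivWithinAt g g' I t) :
    HasDerivWithinAt (fun y => (g y : ℂ)) (g' : ℂ) I t := by
  exact h.ofReal_comp

lemma aux_cplx {f : ℝ → Fin 2 → ℝ} {fd : Fin 2 → ℝ} {I : Set ℝ} {t : ℝ}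
    (h : HasDerivWithinAt f fd I t) :
    HasDerivWithinAt (fun u => (f u 0 : ℂ) + f u 1 * Complex.I)
      ((fd 0 : ℂ) + fd 1 * Complex.I) I t := by
  have h0 := aux_ofReal (hasDerivWithinAt_pi.1 h 0)
  have h1 := aux_ofReal (hasDerivWithinAt_pi.1 h 1)
  exact h0.add (h1.mul_const Complex.I)

theorem statement15 (a b : EReal) (hab : a < b) (I : Set ℝ)
    (hI1 : ∀ x : ℝ, a < (x : EReal) → (x : EReal) < b → x ∈ I)
    (hI2 : ∀ x ∈ I, a ≤ (x : EReal) ∧ (x : EReal) ≤ b)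
    (al be : ℝ → ℝ) (hal : ContinuousOn al I) (hbe : ContinuousOn be I)
    (hker : ∀ t ∈ I, IntegrableOn
      (fun s => Real.exp (-∫ τ in t..s, al τ)) {s : ℝ | t < s ∧ (s : EReal) < b})
    (hbdd : BddAbove (kappa31 b al '' I)) :
    UlamStable2R I (fun t => !![al t, be t; -(be t), al t]) (sSup (kappa31 b al '' I)) ∧
    ((∀ t₀ : ℝ, a < (t₀ : EReal) → (t₀ : EReal) < b →
        Tendsto (fun t => ∫ s in t₀..t, al s)
          (Filter.comap (fun x : ℝ => (x : EReal)) (nhdsWithin b (Iio b))) atTop) →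
      ∀ ε : ℝ, 0 < ε → ∀ φ φd : ℝ → Fin 2 → ℝ,
        (∀ t ∈ I, HasDerivWithinAt φ (φd t) I t) →
        ContinuousOn φd I →
        (∀ t ∈ I, enorm2 (φd t - (!![al t, be t; -(be t), al t]).mulVec (φ t)) ≤ ε) →
        ∃ x : ℝ → Fin 2 → ℝ,
          ((∀ t ∈ I, HasDerivWithinAt x ((!![al t, be t; -(be t), al t]).mulVec (x t)) I t) ∧
            ∀ t ∈ I, enorm2 (φ t - x t) ≤ sSup (kappa31 b al '' I) * ε) ∧
          ∀ y : ℝ → Fin 2 → ℝ,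
            ((∀ t ∈ I, HasDerivWithinAt y ((!![al t, be t; -(be t), al t]).mulVec (y t)) I t) ∧
              ∀ t ∈ I, enorm2 (φ t - y t) ≤ sSup (kappa31 b al '' I) * ε) →
            EqOn y x I) := by
  obtain ⟨t₀, ha0, hb0⟩ := EReal.exists_between_coe_real hab
  have ht₀I : t₀ ∈ I := hI1 t₀ ha0 hb0
  have hconn : ∀ t₁ ∈ I, ∀ t₂ ∈ I, Icc t₁ t₂ ⊆ I := by
    intro t₁ h₁ t₂ h₂ u hu
    rcases eq_or_lt_of_le hu.1 with h | h
    · exact h ▸ h₁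
    rcases eq_or_lt_of_le hu.2 with h' | h'
    · exact h'.symm ▸ h₂
    exact hI1 u (lt_of_le_of_lt (hI2 t₁ h₁).1 (by exact_mod_cast h))
      (lt_of_lt_of_le (by exact_mod_cast h') (hI2 t₂ h₂).2)
  have hOrd : OrdConnected I := ⟨fun x hx y hy => hconn x hx y hy⟩
  have hImeas : MeasurableSet I := hOrd.measurableSet
  set K := sSup (kappa31 b al '' I) with hKdef
  set S : ℝ → Set ℝ := fun t => {s : ℝ | t < s ∧ (s : EReal) < b} with hSdef
  have hSmeas : ∀ t, MeasurableSet (S t) := by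
    intro t
    exact measurableSet_Ioi.inter
      ((isOpen_Iio.preimage continuous_coe_real_ereal).measurableSet)
  have hSsub : ∀ t ∈ I, S t ⊆ I := fun t ht s hs =>
    hI1 s (lt_of_le_of_lt (hI2 t ht).1 (by exact_mod_cast hs.1)) hs.2
  set Al : ℝ → ℝ := fun u => ∫ s in t₀..u, al s with hAldef
  set Be : ℝ → ℝ := fun u => ∫ s in t₀..u, be s with hBedef
  have hAld : ∀ t ∈ I, HasDerivWithinAt Al (al t) I t :=
    fun t ht => aux_ftc1 hab hI1 hI2 hconn hImeas hal ht₀I ht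
  have hBed : ∀ t ∈ I, HasDerivWithinAt Be (be t) I t :=
    fun t ht => aux_ftc1 hab hI1 hI2 hconn hImeas hbe ht₀I ht
  set P : ℝ → ℂ := fun u => (Al u : ℂ) - (Be u : ℂ) * Complex.I with hPdef
  set p : ℝ → ℂ := fun u => (al u : ℂ) - (be u : ℂ) * Complex.I with hpdef
  have hPd : ∀ t ∈ I, HasDerivWithinAt P (p t) I t :=
    fun t ht => (aux_ofReal (hAld t ht)).sub ((aux_ofReal (hBed t ht)).mul_const Complex.I)
  have hPcont : ContinuousOn P I := fun t ht => (hPd t ht).continuousWithinAt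
  have halint : ∀ t ∈ I, ∀ s ∈ I, IntervalIntegrable al volume t s := by
    intro t ht s hs
    apply ContinuousOn.intervalIntegrable
    apply hal.mono
    rcases le_total t s with hle | hle
    · rw [uIcc_of_le hle]; exact hconn t ht s hs
    · rw [uIcc_of_ge hle]; exact hconn s hs t ht
  have hAladd : ∀ t ∈ I, ∀ s ∈ I, Al s - Al t = ∫ τ in t..s, al τ := by
    intro t ht s hs
    have h := intervalIntegral.integral_add_adjacent_intervals
      (halint t₀ ht₀I t ht) (halint t ht s hs)
    rw [hAldef]
    dsimp only
    linarith [h]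
  have habsP : ∀ u, ‖Complex.exp (P u)‖ = Real.exp (Al u) := by
    intro u
    rw [Complex.norm_exp]
    congr 1
    simp [hPdef]
  have habsPn : ∀ u, ‖Complex.exp (-P u)‖ = Real.exp (-Al u) := by
    intro u
    rw [Complex.norm_exp]
    congr 1
    simp [hPdef]
  -- kappa31 facts
  have hkapK : ∀ t ∈ I, kappa31 b al t ≤ K := fun t ht => le_csSup hbdd ⟨t, ht, rfl⟩
  have hK0 : 0 < K := by
    obtain ⟨m₂, hm₂1, hm₂2⟩ := EReal.exists_between_coe_real hb0
    have hm : t₀ < m₂ := by exact_mod_cast hm₂1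
    have hsub : Ioo t₀ m₂ ⊆ S t₀ := fun s hs =>
      ⟨hs.1, lt_trans (by exact_mod_cast hs.2) hm₂2⟩
    have hpos : 0 < kappa31 b al t₀ := by
      rw [kappa31]
      refine (setIntegral_pos_iff_support_of_nonneg_ae
        (ae_of_all _ fun s => (Real.exp_pos _).le) (hker t₀ ht₀I)).2 ?_
      have hsupp : (Function.support fun s => Real.exp (-∫ τ in t₀..s, al τ)) = univ := by
        ext s; simp [Real.exp_ne_zero]
      rw [hsupp, univ_inter]
      refine lt_of_lt_of_le ?_ (measure_mono hsub)
      rw [Real.volume_Ioo]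
      exact ENNReal.ofReal_pos.2 (by linarith)
    exact lt_of_lt_of_le hpos (hkapK t₀ ht₀I)
  -- solution family
  set w : ℂ → ℝ → ℂ := fun C u => C * Complex.exp (P u) with hwdef
  set xC : ℂ → ℝ → Fin 2 → ℝ := fun C u => ![(w C u).re, (w C u).im] with hxCdef
  have hwd : ∀ (C : ℂ), ∀ t ∈ I, HasDerivWithinAt (w C) (p t * w C t) I t := by
    intro C t ht
    have h := ((hPd t ht).cexp).const_mul C
    refine HasDerivWithinAt.congr_deriv h ?_
    show C * (Complex.exp (P t) * p t) = p t * (C * Complex.exp (P t))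
    ring
  have hsolC : ∀ (C : ℂ), ∀ t ∈ I,
      HasDerivWithinAt (xC C) ((!![al t, be t; -(be t), al t]).mulVec (xC C t)) I t := by
    intro C t ht
    have hw := hwd C t ht
    have h0 : HasDerivWithinAt (fun u => (w C u).re) ((p t * w C t).re) I t :=
      Complex.reCLM.hasFDerivAt.comp_hasDerivWithinAt t hw
    have h1 : HasDerivWithinAt (fun u => (w C u).im) ((p t * w C t).im) I t :=
      Complex.imCLM.hasFDerivAt.comp_hasDerivWithinAt t hw
    refine hasDerivWithinAt_pi.2 ?_
    intro i
    fin_cases i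
    · refine HasDerivWithinAt.congr_deriv (f' := (p t * w C t).re) ?_ ?_
      · exact h0
      · simp [hxCdef, hpdef, Matrix.mulVec, dotProduct, Matrix.vecHead, Matrix.vecTail, Fin.sum_univ_two,
          Complex.mul_re, Complex.sub_re, Complex.sub_im, Complex.ofReal_re,
          Complex.ofReal_im, Complex.mul_im, Complex.I_re, Complex.I_im]
    · refine HasDerivWithinAt.congr_deriv (f' := (p t * w C t).im) ?_ ?_
      · exact h1
      · simp [hxCdef, hpdef, Matrix.mulVec, dotProduct, Matrix.vecHead, Matrix.vecTail, Fin.sum_univ_two,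
          Complex.mul_re, Complex.sub_re, Complex.sub_im, Complex.ofReal_re,
          Complex.ofReal_im, Complex.mul_im, Complex.I_re, Complex.I_im]
        ring
  -- the key existence bound
  have key : ∀ ε : ℝ, 0 < ε → ∀ φ φd : ℝ → Fin 2 → ℝ,
      (∀ t ∈ I, HasDerivWithinAt φ (φd t) I t) →
      ContinuousOn φd I →
      (∀ t ∈ I, enorm2 (φd t - (!![al t, be t; -(be t), al t]).mulVec (φ t)) ≤ ε) →
      ∃ C : ℂ, ∀ t ∈ I,
        ‖(φ t 0 : ℂ) + φ t 1 * Complex.I - w C t‖ ≤ K * ε := by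
    intro ε hε φ φd h1 h2 h3
    set zc : ℝ → ℂ := fun u => (φ u 0 : ℂ) + φ u 1 * Complex.I with hzcdef
    set q : ℝ → ℂ := fun u => ((φd u 0 : ℂ) + φd u 1 * Complex.I) - p u * zc u with hqdef
    have hzd : ∀ t ∈ I, HasDerivWithinAt zc ((φd t 0 : ℂ) + φd t 1 * Complex.I) I t :=
      fun t ht => aux_cplx (h1 t ht)
    have hq : ∀ t ∈ I, ‖q t‖ ≤ ε := by
      intro t ht
      have h := h3 t ht
      rw [aux_enorm2] at h
      have heq : q t = ((φd t - (!![al t, be t; -(be t), al t]).mulVec (φ t)) 0 : ℂ) +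
          ((φd t - (!![al t, be t; -(be t), al t]).mulVec (φ t)) 1 : ℝ) * Complex.I := by
        simp [hqdef, hzcdef, hpdef, Pi.sub_apply, Matrix.mulVec, dotProduct, Matrix.vecHead, Matrix.vecTail,
          Fin.sum_univ_two]
        push_cast
        linear_combination ((be t : ℂ) * (φ t 1 : ℂ)) * Complex.I_sq
      rw [heq]
      exact h
    have hφcont : ContinuousOn φ I := fun t ht => (h1 t ht).continuousWithinAt
    have hzcont : ContinuousOn zc I := fun t ht => (hzd t ht).continuousWithinAt
    have hqcont : ContinuousOn q I := by
      apply ContinuousOn.sub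
      · exact (Complex.continuous_ofReal.comp_continuousOn
          ((continuous_apply 0).comp_continuousOn h2)).add
          (((Complex.continuous_ofReal.comp_continuousOn
          ((continuous_apply 1).comp_continuousOn h2))).mul continuousOn_const)
      · exact (((Complex.continuous_ofReal.comp_continuousOn hal).sub
          ((Complex.continuous_ofReal.comp_continuousOn hbe).mul
            continuousOn_const)).mul hzcont)
    set f : ℝ → ℂ := fun s => Complex.exp (-P s) * q s with hfdef
    have hfcont : ContinuousOn f I :=
      (Complex.continuous_exp.comp_continuousOn hPcont.neg).mul hqcont
    have hnormf : ∀ t ∈ I, ∀ s ∈ S t,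
        ‖f s‖ ≤ (ε * Real.exp (-Al t)) * Real.exp (-∫ τ in t..s, al τ) := by
      intro t ht s hs
      have hsI : s ∈ I := hSsub t ht hs
      have h5 : ‖f s‖ = Real.exp (-Al s) * ‖q s‖ := by
        rw [hfdef]
        dsimp only
        rw [norm_mul, habsPn]
      have h6 : Real.exp (-Al s) = Real.exp (-Al t) * Real.exp (-∫ τ in t..s, al τ) := by
        rw [← Real.exp_add, ← hAladd t ht s hsI]
        ring_nf
      rw [h5, h6]
      have := hq s hsI
      have hp1 : (0:ℝ) < Real.exp (-Al t) := Real.exp_pos _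
      have hp2 : (0:ℝ) < Real.exp (-∫ τ in t..s, al τ) := Real.exp_pos _
      have h0q : 0 ≤ ‖q s‖ := norm_nonneg _
      nlinarith [mul_le_mul_of_nonneg_left this (mul_pos hp1 hp2).le]
    have hfint : ∀ t ∈ I, IntegrableOn f (S t) := by
      intro t ht
      refine Integrable.mono' ((hker t ht).const_mul (ε * Real.exp (-Al t))) ?_ ?_
      · exact (hfcont.mono (hSsub t ht)).aestronglyMeasurable (hSmeas t)
      · exact (ae_restrict_iff' (hSmeas t)).2 (ae_of_all _ (fun s hs => hnormf t ht s hs))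
    set g : ℝ → ℂ := fun t => ∫ s in S t, f s with hgdef
    have hgb : ∀ t ∈ I, ‖g t‖ ≤ ε * Real.exp (-Al t) * kappa31 b al t := by
      intro t ht
      have c1 : ‖g t‖ ≤ ∫ s in S t, ‖f s‖ := by
        exact norm_integral_le_integral_norm _
      have c2 : (∫ s in S t, ‖f s‖) ≤
          ∫ s in S t, (ε * Real.exp (-Al t)) * Real.exp (-∫ τ in t..s, al τ) :=
        setIntegral_mono_on ((hfint t ht).norm) ((hker t ht).const_mul _) (hSmeas t)
          (hnormf t ht)
      have c3 : (∫ s in S t, (ε * Real.exp (-Al t)) * Real.exp (-∫ τ in t..s, al τ)) =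
          (ε * Real.exp (-Al t)) * kappa31 b al t := by
        rw [kappa31, MeasureTheory.integral_const_mul]
      calc ‖g t‖ ≤ ∫ s in S t, ‖f s‖ := c1
        _ ≤ _ := c2
        _ = ε * Real.exp (-Al t) * kappa31 b al t := by rw [c3]
    have hFd : ∀ t ∈ I, HasDerivWithinAt (fun u => Complex.exp (-P u) * zc u) (f t) I t := by
      intro t ht
      have h := ((hPd t ht).neg.cexp).mul (hzd t ht)
      refine HasDerivWithinAt.congr_deriv h ?_
      rw [hfdef, hqdef]
      dsimp only
      simp only [Pi.neg_apply]
      ring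
    have hsplit : ∀ t₁, t₁ ∈ I → ∀ t₂, t₂ ∈ I → t₁ ≤ t₂ →
        g t₁ = (∫ s in t₁..t₂, f s) + g t₂ := by
      intro t₁ hh₁ t₂ hh₂ hle
      have hseteq : S t₁ = Ioo t₁ t₂ ∪ (S t₁ ∩ Ici t₂) := by
        ext s
        simp only [hSdef, mem_union, mem_Ioo, mem_inter_iff, mem_Ici, mem_setOf_eq]
        constructor
        · rintro ⟨hs1, hs2⟩
          rcases lt_or_ge s t₂ with h | h
          · exact Or.inl ⟨hs1, h⟩
          · exact Or.inr ⟨⟨hs1, hs2⟩, h⟩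
        · rintro (⟨h1', h2'⟩ | ⟨⟨h1', h2'⟩, _⟩)
          · exact ⟨h1', lt_of_lt_of_le (by exact_mod_cast h2') (hI2 t₂ hh₂).2⟩
          · exact ⟨h1', h2'⟩
      have hdisj : Disjoint (Ioo t₁ t₂) (S t₁ ∩ Ici t₂) := by
        rw [Set.disjoint_left]
        rintro s ⟨_, h2'⟩ ⟨_, h4'⟩
        exact absurd h4' (not_le.2 h2')
      have hint1 : IntegrableOn f (Ioo t₁ t₂) :=
        (hfint t₁ hh₁).mono_set (fun s hs =>
          ⟨hs.1, lt_of_lt_of_le (by exact_mod_cast hs.2) (hI2 t₂ hh₂).2⟩)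
      have hint2 : IntegrableOn f (S t₁ ∩ Ici t₂) :=
        (hfint t₁ hh₁).mono_set inter_subset_left
      have h5 : ∫ s in S t₁, f s = (∫ s in Ioo t₁ t₂, f s) + ∫ s in S t₁ ∩ Ici t₂, f s := by
        nth_rewrite 1 [hseteq]
        exact setIntegral_union hdisj ((hSmeas t₁).inter measurableSet_Ici) hint1 hint2
      have hae : (S t₁ ∩ Ici t₂ : Set ℝ) =ᵐ[volume] S t₂ := by
        rw [MeasureTheory.ae_eq_set]
        constructor
        · refine measure_mono_null ?_ (measure_singleton t₂)
          rintro s ⟨⟨⟨hs1, hs2⟩, hs3⟩, hns⟩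
          simp only [hSdef, mem_setOf_eq, not_and, not_lt] at hns
          have : s ≤ t₂ := by
            by_contra hgt
            push_neg at hgt
            exact absurd hs2 (not_lt.2 (hns hgt))
          exact mem_singleton_iff.2 (le_antisymm this hs3)
        · refine measure_mono_null ?_ (measure_empty (μ := volume))
          rintro s ⟨⟨hs1, hs2⟩, hns⟩
          exact absurd (⟨⟨lt_of_le_of_lt hle hs1, hs2⟩, hs1.le⟩ :
            s ∈ S t₁ ∩ Ici t₂) hns
      have h6 : ∫ s in S t₁ ∩ Ici t₂, f s = g t₂ := setIntegral_congr_set hae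
      have h7 : (∫ s in Ioo t₁ t₂, f s) = ∫ s in t₁..t₂, f s := by
        rw [intervalIntegral.integral_of_le hle, integral_Ioc_eq_integral_Ioo]
      rw [hgdef]
      dsimp only
      rw [h5, h6, h7]
    have hconstF : ∀ t ∈ I,
        Complex.exp (-P t) * zc t + g t = Complex.exp (-P t₀) * zc t₀ + g t₀ := by
      intro t ht
      rcases le_total t₀ t with hle | hle
      · have hftc := aux_ftc2 hconn hFd hfcont ht₀I ht hle
        have hgs := hsplit t₀ ht₀I t ht hle
        rw [hgs, hftc]
        ring
      · have hftc := aux_ftc2 hconn hFd hfcont ht ht₀I hle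
        have hgs := hsplit t ht t₀ ht₀I hle
        rw [hgs, hftc]
        ring
    refine ⟨Complex.exp (-P t₀) * zc t₀ + g t₀, ?_⟩
    intro t ht
    have hCt := hconstF t ht
    have hexp : Complex.exp (-P t) * Complex.exp (P t) = 1 := by
      rw [← Complex.exp_add]
      simp
    have hzw : zc t - w (Complex.exp (-P t₀) * zc t₀ + g t₀) t = -(Complex.exp (P t) * g t) := by
      rw [hwdef]
      dsimp only
      rw [← hCt]
      linear_combination (-(zc t)) * hexp
    have habsg := hgb t ht
    have hfinal : ‖zc t - w (Complex.exp (-P t₀) * zc t₀ + g t₀) t‖ =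
        Real.exp (Al t) * ‖g t‖ := by
      rw [hzw, norm_neg, norm_mul, habsP]
    rw [show (φ t 0 : ℂ) + φ t 1 * Complex.I = zc t from rfl, hfinal]
    have hkle := hkapK t ht
    have hknn : 0 ≤ kappa31 b al t :=
      setIntegral_nonneg (hSmeas t) (fun s _ => (Real.exp_pos _).le)
    have hee : Real.exp (Al t) * Real.exp (-Al t) = 1 := by
      rw [← Real.exp_add]; simp
    have h9 : Real.exp (Al t) * ‖g t‖ ≤
        Real.exp (Al t) * (ε * Real.exp (-Al t) * kappa31 b al t) :=
      mul_le_mul_of_nonneg_left habsg (Real.exp_pos _).le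
    have h10 : Real.exp (Al t) * (ε * Real.exp (-Al t) * kappa31 b al t) =
        ε * kappa31 b al t := by
      linear_combination (ε * kappa31 b al t) * hee
    rw [h10] at h9
    have h11 : ε * kappa31 b al t ≤ ε * K := mul_le_mul_of_nonneg_left hkle hε.le
    rw [mul_comm K ε]
    linarith
  -- translation between enorm2 and complex abs
  have henorm : ∀ (v : Fin 2 → ℝ) (zz : ℂ),
      enorm2 (v - ![zz.re, zz.im]) = ‖(v 0 : ℂ) + v 1 * Complex.I - zz‖ := by
    intro v zz
    rw [aux_enorm2]
    congr 1
    have h0 : (v - ![zz.re, zz.im]) 0 = v 0 - zz.re := rfl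
    have h1 : (v - ![zz.re, zz.im]) 1 = v 1 - zz.im := rfl
    rw [h0, h1]
    push_cast
    rw [← Complex.re_add_im zz]
    ring_nf
    simp [Complex.ext_iff]
    ring
  -- constancy helper
  have hconst0 : ∀ (h : ℝ → ℂ), (∀ t ∈ I, HasDerivWithinAt h 0 I t) → ∀ t ∈ I, h t = h t₀ := by
    intro h hd t ht
    rcases le_total t₀ t with hle | hle
    · have h2 := aux_ftc2 (k := fun _ => 0) hconn (fun s hs => hd s hs) continuousOn_const
        ht₀I ht hle
      simp at h2
      exact (sub_eq_zero.1 h2.symm)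
    · have h2 := aux_ftc2 (k := fun _ => 0) hconn (fun s hs => hd s hs) continuousOn_const
        ht ht₀I hle
      simp at h2
      exact (sub_eq_zero.1 h2.symm).symm
  constructor
  · refine ⟨hK0, ?_⟩
    intro ε hε φ φd h1 h2 h3
    obtain ⟨C, hC⟩ := key ε hε φ φd h1 h2 h3
    refine ⟨xC C, hsolC C, ?_⟩
    intro t ht
    have := hC t ht
    rw [hxCdef]
    dsimp only
    rw [henorm]
    exact this
  · intro hlim ε hε φ φd h1 h2 h3
    obtain ⟨C, hC⟩ := key ε hε φ φd h1 h2 h3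
    have hxCbound : ∀ t ∈ I, enorm2 (φ t - xC C t) ≤ K * ε := by
      intro t ht
      rw [hxCdef]
      dsimp only
      rw [henorm]
      exact hC t ht
    refine ⟨xC C, ⟨hsolC C, fun t ht => hxCbound t ht⟩, ?_⟩
    rintro y ⟨hy1, hy2⟩
    set yc : ℝ → ℂ := fun u => (y u 0 : ℂ) + y u 1 * Complex.I with hycdef
    have hyd : ∀ t ∈ I, HasDerivWithinAt yc (p t * yc t) I t := by
      intro t ht
      have h := aux_cplx (hy1 t ht)
      refine HasDerivWithinAt.congr_deriv h ?_
      simp [hycdef, hpdef, Matrix.mulVec, dotProduct, Matrix.vecHead, Matrix.vecTail, Fin.sum_univ_two]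
      push_cast
      linear_combination ((be t : ℂ) * (y t 1 : ℂ)) * Complex.I_sq
    have hvd : ∀ t ∈ I,
        HasDerivWithinAt (fun u => Complex.exp (-P u) * (yc u - w C u)) 0 I t := by
      intro t ht
      have h := ((hPd t ht).neg.cexp).mul ((hyd t ht).sub (hwd C t ht))
      refine HasDerivWithinAt.congr_deriv h ?_
      simp only [Pi.neg_apply, Pi.sub_apply]
      ring
    have hcnst := hconst0 _ hvd
    set c : ℂ := Complex.exp (-P t₀) * (yc t₀ - w C t₀) with hcdef
    have hvb : ∀ t ∈ I, ‖c‖ * Real.exp (Al t) ≤ 2 * (K * ε) := by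
      intro t ht
      have e1 : enorm2 (φ t - y t) =
          ‖((φ t 0 : ℂ) + φ t 1 * Complex.I) - yc t‖ := by
        rw [aux_enorm2]
        congr 1
        have p0 : (φ t - y t) 0 = φ t 0 - y t 0 := rfl
        have p1 : (φ t - y t) 1 = φ t 1 - y t 1 := rfl
        rw [p0, p1, hycdef]
        push_cast
        ring
      have b1 : ‖((φ t 0 : ℂ) + φ t 1 * Complex.I) - yc t‖ ≤ K * ε := by
        rw [← e1]; exact hy2 t ht
      have b2 : ‖((φ t 0 : ℂ) + φ t 1 * Complex.I) - w C t‖ ≤ K * ε := hC t ht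
      have b3 : ‖yc t - w C t‖ ≤ 2 * (K * ε) := by
        have : yc t - w C t = -((((φ t 0 : ℂ) + φ t 1 * Complex.I) - yc t)) +
            ((((φ t 0 : ℂ) + φ t 1 * Complex.I) - w C t)) := by ring
        rw [this]
        calc ‖_‖ ≤ ‖-((((φ t 0 : ℂ) + φ t 1 * Complex.I) - yc t))‖ +
            ‖(((φ t 0 : ℂ) + φ t 1 * Complex.I) - w C t)‖ :=
              norm_add_le _ _
          _ ≤ K * ε + K * ε := by
              rw [norm_neg]
              exact add_le_add b1 b2
          _ = 2 * (K * ε) := by ring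
      have hcc := hcnst t ht
      have habs : ‖c‖ = Real.exp (-Al t) * ‖yc t - w C t‖ := by
        rw [← hcc, norm_mul, habsPn]
      rw [habs]
      have hee : Real.exp (-Al t) * Real.exp (Al t) = 1 := by
        rw [← Real.exp_add]; simp
      calc Real.exp (-Al t) * ‖yc t - w C t‖ * Real.exp (Al t)
          = ‖yc t - w C t‖ * (Real.exp (-Al t) * Real.exp (Al t)) := by ring
        _ = ‖yc t - w C t‖ := by rw [hee]; ring
        _ ≤ 2 * (K * ε) := b3
    have hc0 : c = 0 := by
      by_contra hcne
      have habsc : 0 < ‖c‖ := norm_pos_iff.2 hcne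
      have hXpos : 0 < 2 * (K * ε) / ‖c‖ := by positivity
      set Mv : ℝ := Real.log (2 * (K * ε) / ‖c‖) + 1 with hMvdef
      have hT := hlim t₀ ha0 hb0
      have hev1 : ∀ᶠ t in Filter.comap (fun x : ℝ => (x : EReal)) (nhdsWithin b (Iio b)),
          Mv < (∫ s in t₀..t, al s) := hT.eventually_gt_atTop Mv
      have hev2 : ∀ᶠ t in Filter.comap (fun x : ℝ => (x : EReal)) (nhdsWithin b (Iio b)),
          t ∈ I := by
        have hIio : {x : ℝ | (x : EReal) < b} ∈
            Filter.comap (fun x : ℝ => (x : EReal)) (nhdsWithin b (Iio b)) :=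
          preimage_mem_comap self_mem_nhdsWithin
        have hIoi : {x : ℝ | (t₀ : EReal) < (x : EReal)} ∈
            Filter.comap (fun x : ℝ => (x : EReal)) (nhdsWithin b (Iio b)) :=
          preimage_mem_comap (mem_nhdsWithin_of_mem_nhds (isOpen_Ioi.mem_nhds hb0))
        filter_upwards [hIio, hIoi] with x hx1 hx2
        exact hI1 x (lt_trans ha0 hx2) hx1
      have hne : (Filter.comap (fun x : ℝ => (x : EReal)) (nhdsWithin b (Iio b))).NeBot := by
        induction b with
        | bot => exact absurd hab (by simp)
        | coe r =>
            have htd : Tendsto (fun x : ℝ => (x : EReal)) (nhdsWithin r (Iio r))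
                (nhdsWithin (r : EReal) (Iio (r : EReal))) := by
              apply tendsto_nhdsWithin_of_tendsto_nhds_of_eventually_within
              · exact (continuous_coe_real_ereal.tendsto r).mono_left nhdsWithin_le_nhds
              · exact eventually_mem_nhdsWithin.mono (fun x hx => by
                  exact EReal.coe_lt_coe_iff.2 hx)
            exact Filter.neBot_of_le (tendsto_iff_comap.1 htd)
        | top =>
            have htd : Tendsto (fun x : ℝ => (x : EReal)) atTop
                (nhdsWithin ⊤ (Iio ⊤)) := by
              apply tendsto_nhdsWithin_of_tendsto_nhds_of_eventually_within
              · exact EReal.tendsto_nhds_top_iff_real.2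
                  (fun x => (eventually_gt_atTop x).mono (fun a ha => by exact_mod_cast ha))
              · exact Eventually.of_forall (fun x => by simp [EReal.coe_lt_top])
            exact Filter.neBot_of_le (tendsto_iff_comap.1 htd)
      obtain ⟨t, htM, htI⟩ := (hev1.and hev2).exists
      have hb' := hvb t htI
      have hAlt : Al t = ∫ s in t₀..t, al s := rfl
      have hlt : 2 * (K * ε) / ‖c‖ < Real.exp (Al t) := by
        have l1 : 2 * (K * ε) / ‖c‖ < Real.exp Mv := by
          rw [hMvdef, Real.exp_add, Real.exp_log hXpos]
          nlinarith [Real.exp_one_gt_d9, hXpos]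
        have l2 : Real.exp Mv < Real.exp (Al t) := Real.exp_lt_exp.2 (hAlt ▸ htM)
        linarith
      have : 2 * (K * ε) < ‖c‖ * Real.exp (Al t) := by
        rw [div_lt_iff₀ habsc] at hlt
        linarith [hlt]
      linarith [hvb t htI]
    intro t ht
    have h0' := hcnst t ht
    rw [hc0] at h0'
    have hsub0 : yc t - w C t = 0 := by
      rcases mul_eq_zero.1 h0' with h | h
      · exact absurd h (Complex.exp_ne_zero _)
      · exact h
    have hyw : yc t = w C t := sub_eq_zero.1 hsub0
    show y t = xC C t
    funext i
    fin_cases i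
    · have : y t 0 = (yc t).re := by simp [hycdef]
      rw [hyw] at this
      simpa [hxCdef] using this
    · have : y t 1 = (yc t).im := by simp [hycdef]
      rw [hyw] at this
      simpa [hxCdef] using this
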